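/- Let n, m be natural numbers, let Ã be a symmetric real n×n matrix such that I − Ã is positive semidefinite, let γ ∈ (0,1), and let S be a real n×m matrix. Define L_GSD(F) = tr((F − S)ᵀ(F − S)) + (1/(1−γ) − 1)·tr(Fᵀ(I − Ã)F). Then F* = (1−γ)·(I − γÃ)⁻¹·S is the unique minimizer of L_GSD: for every real n×m matrix F with F ≠ F*, one has L_GSD(F*) < L_GSD(F). -/

import Mathlib

open Matrix

/-- The graph-signal-denoising objective
`L_GSD(F) = tr((F − S)ᵀ(F − S)) + (1/(1−γ) − 1)·tr(Fᵀ(I − Ã)F)`. -/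
noncomputable def LGSD {n m : ℕ} (Atil : Matrix (Fin n) (Fin n) ℝ) (γ : ℝ)
    (S F : Matrix (Fin n) (Fin m) ℝ) : ℝ :=
  ((F - S)ᵀ * (F - S)).trace + (1 / (1 - γ) - 1) * (Fᵀ * (1 - Atil) * F).trace

private lemma psd_smul {n : ℕ} {A : Matrix (Fin n) (Fin n) ℝ} (hA : A.PosSemidef)
    {c : ℝ} (hc : 0 ≤ c) : (c • A).PosSemidef := by
  refine Matrix.PosSemidef.of_dotProduct_mulVec_nonneg ?_ fun x => ?_
  · unfold Matrix.IsHermitian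
    rw [conjTranspose_smul, hA.1]
    simp
  · rw [smul_mulVec, dotProduct_smul, smul_eq_mul]
    exact mul_nonneg hc (hA.dotProduct_mulVec_nonneg x)

private lemma pd_smul_one {n : ℕ} {c : ℝ} (hc : 0 < c) :
    (c • (1 : Matrix (Fin n) (Fin n) ℝ)).PosDef := by
  refine Matrix.PosDef.of_dotProduct_mulVec_pos ?_ fun x hx => ?_
  · unfold Matrix.IsHermitian
    rw [conjTranspose_smul, conjTranspose_one]
    simp
  · rw [smul_mulVec, dotProduct_smul, smul_eq_mul, one_mulVec]
    have : (0:ℝ) < star x ⬝ᵥ x := by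
      simpa using (dotProduct_star_self_pos_iff (v := x)).2 hx
    exact mul_pos hc (by simpa using this)

/-- trace of `Dᵀ M D` is positive when `M` is positive definite and `D ≠ 0`. -/
private lemma trace_pos_of_posDef {n m : ℕ} {M : Matrix (Fin n) (Fin n) ℝ}
    (hM : M.PosDef) {D : Matrix (Fin n) (Fin m) ℝ} (hD : D ≠ 0) :
    0 < (Dᵀ * M * D).trace := by
  have key : (Dᵀ * M * D).trace
      = ∑ j : Fin m, (fun i => D i j) ⬝ᵥ (M *ᵥ fun i => D i j) := by
    simp only [Matrix.trace, Matrix.diag, Matrix.mul_apply, dotProduct, Matrix.mulVec,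
      Matrix.transpose_apply, dotProduct]
    congr 1
    ext j
    simp_rw [Finset.sum_mul, Finset.mul_sum]
    rw [Finset.sum_comm]
    refine Finset.sum_congr rfl fun x _ => Finset.sum_congr rfl fun y _ => by ring
  rw [key]
  obtain ⟨i0, j0, hij⟩ : ∃ i j, D i j ≠ 0 := by
    by_contra h
    push_neg at h
    exact hD (by ext i j; simpa using h i j)
  refine Finset.sum_pos' (fun j _ => ?_) ⟨j0, Finset.mem_univ _, ?_⟩
  · have := hM.posSemidef.dotProduct_mulVec_nonneg (fun i => D i j)
    simpa using this
  · have hx : (fun i => D i j0) ≠ 0 := by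
      intro h
      exact hij (by simpa using congrFun h i0)
    have := hM.dotProduct_mulVec_pos (x := fun i => D i j0) hx
    simpa using this

/-- The PPNP propagation `F* = (1−γ)(I − γÃ)⁻¹ S` is the unique minimizer of the
graph-signal-denoising objective: any other matrix attains a strictly larger value. -/
theorem ppnp_unique_minimizer_gsd (n m : ℕ) (Atil : Matrix (Fin n) (Fin n) ℝ)
    (hsym : Atil.IsSymm) (hpsd : (1 - Atil).PosSemidef)
    (γ : ℝ) (hγ : γ ∈ Set.Ioo (0 : ℝ) 1)
    (S : Matrix (Fin n) (Fin m) ℝ) :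
    ∀ F : Matrix (Fin n) (Fin m) ℝ, F ≠ (1 - γ) • ((1 - γ • Atil)⁻¹ * S) →
      LGSD Atil γ S ((1 - γ) • ((1 - γ • Atil)⁻¹ * S)) < LGSD Atil γ S F := by
  obtain ⟨hγ0, hγ1⟩ := hγ
  have h1γ : (0:ℝ) < 1 - γ := by linarith
  set c : ℝ := 1 / (1 - γ) - 1 with hc_def
  have hc : 0 < c := by
    rw [hc_def]
    have : (1:ℝ) < 1 / (1 - γ) := by
      rw [lt_div_iff₀ h1γ]; linarith
    linarith
  set M : Matrix (Fin n) (Fin n) ℝ := 1 + c • (1 - Atil) with hM_def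
  -- M is positive definite
  have hMpd : M.PosDef := by
    have h1 : (1 : Matrix (Fin n) (Fin n) ℝ).PosDef := Matrix.PosDef.one
    exact h1.add_posSemidef (psd_smul hpsd hc.le)
  have hMsym : Mᵀ = M := by
    have := hMpd.isHermitian
    simpa [Matrix.IsHermitian] using this
  -- (1-γ) • M = 1 - γ • Atil
  have hscale : (1 - γ) • M = 1 - γ • Atil := by
    rw [hM_def, smul_add, smul_smul]
    have hcc : (1 - γ) * c = γ := by
      rw [hc_def]; field_simp; ring
    rw [hcc, smul_sub]
    ext i j
    simp [Matrix.one_apply, Matrix.smul_apply]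
    split <;> ring
  -- 1 - γ•Atil is positive definite, hence invertible
  have hXpd : (1 - γ • Atil).PosDef := by
    rw [← hscale]
    have : ((1-γ) • M) = ((1-γ)*c) • (1 - Atil) + (1-γ) • (1 : Matrix (Fin n) (Fin n) ℝ) := by
      rw [hM_def, smul_add, smul_smul, add_comm]
    rw [this]
    exact Matrix.PosDef.posSemidef_add (psd_smul hpsd (by positivity)) (pd_smul_one h1γ)
  set Fs : Matrix (Fin n) (Fin m) ℝ := (1 - γ) • ((1 - γ • Atil)⁻¹ * S) with hFs_def
  -- M * Fs = S
  have hMFs : M * Fs = S := by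
    have h1 : M * Fs = ((1 - γ) • M) * ((1 - γ • Atil)⁻¹ * S) := by
      rw [hFs_def, Matrix.smul_mul, Matrix.mul_smul]
    rw [h1, hscale, ← Matrix.mul_assoc,
      Matrix.mul_nonsing_inv _ hXpd.det_pos.ne'.isUnit, Matrix.one_mul]
  -- LGSD as a quadratic in F
  have hQ : ∀ F : Matrix (Fin n) (Fin m) ℝ, LGSD Atil γ S F =
      (Fᵀ * M * F).trace - (Fᵀ * S).trace - (Sᵀ * F).trace + (Sᵀ * S).trace := by
    intro F
    rw [LGSD, hM_def]
    simp only [Matrix.add_mul, Matrix.mul_add, Matrix.one_mul, Matrix.mul_one,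
      Matrix.smul_mul, Matrix.mul_smul, transpose_sub, Matrix.sub_mul, Matrix.mul_sub,
      Matrix.trace_add, Matrix.trace_sub, Matrix.trace_smul, smul_eq_mul]
    ring
  intro F hF
  set D : Matrix (Fin n) (Fin m) ℝ := F - Fs with hD_def
  have hDne : D ≠ 0 := sub_ne_zero.mpr hF
  have hFD : F = Fs + D := by rw [hD_def]; abel
  -- trace identities
  have tr1 : (Sᵀ * D).trace = (Dᵀ * S).trace := by
    rw [← Matrix.trace_transpose (Sᵀ * D), Matrix.transpose_mul, Matrix.transpose_transpose]
  have tr2 : (Fsᵀ * M * D).trace = (Dᵀ * S).trace := by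
    rw [← Matrix.trace_transpose (Fsᵀ * M * D)]
    rw [Matrix.transpose_mul, Matrix.transpose_mul, Matrix.transpose_transpose, hMsym, hMFs]
  have tr3 : (Dᵀ * M * Fs).trace = (Dᵀ * S).trace := by
    rw [Matrix.mul_assoc, hMFs]
  have hdiff : LGSD Atil γ S F = LGSD Atil γ S Fs + (Dᵀ * M * D).trace := by
    rw [hQ F, hQ Fs, hFD]
    simp only [transpose_add, Matrix.add_mul, Matrix.mul_add, Matrix.trace_add]
    rw [tr1, tr2, tr3]
    ring
  rw [hdiff]
  linarith [trace_pos_of_posDef hMpd hDne]
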